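/- arXiv:2103.05931 — 3 statements merged into one kernel-verified Lean document; each statement's English description precedes it below -/
import Mathlib

section
/- Let (X, d) be a metric space, w : X → ℝ with w(x) ≥ 0 for all x, and 0 < ε ≤ 1. Let p, q, r, c, p_ℓ, q_ℓ, c_ℓ ∈ X satisfy: (i) d(p, r) + d(r, q) = d(p, q); (ii) d(p, p_ℓ) ≤ d(p, r) and d(q, q_ℓ) ≤ d(q, r); (iii) w(c) + d(c, c_ℓ) ≤ w(p) + d(p, p_ℓ); (iv) d(p_ℓ, c_ℓ) ≤ (ε/4)·d(p_ℓ, q_ℓ). Then (w(p) + d(p, c) + w(c)) + (w(c) + d(c, q) + w(q)) ≤ (6 + ε)·(w(p) + d(p, q) + w(q)). -/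
/-- The core stretch-factor bound from Lemma 3 (polygonal domain / terrain spanner):
under the geodesic-crossing, projection, representative-point, and semi-separation
hypotheses, the two-edge detour through `c` has weighted length at most
`(6 + ε)` times the weighted distance between `p` and `q`. -/
theorem stmt6 {X : Type*} [MetricSpace X] (w : X → ℝ) (hw : ∀ x, 0 ≤ w x)
    (ε : ℝ) (hε0 : 0 < ε) (hε1 : ε ≤ 1) (p q r c pl ql cl : X)
    (hr : dist p r + dist r q = dist p q)
    (hp : dist p pl ≤ dist p r)
    (hq : dist q ql ≤ dist q r)
    (hc : w c + dist c cl ≤ w p + dist p pl)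
    (hsep : dist pl cl ≤ (ε / 4) * dist pl ql) :
    (w p + dist p c + w c) + (w c + dist c q + w q) ≤
      (6 + ε) * (w p + dist p q + w q) := by
  have t1 : dist p c ≤ dist p pl + dist pl cl + dist cl c :=
    (dist_triangle p pl c).trans (by linarith [dist_triangle pl cl c])
  have t2 : dist c q ≤ dist c cl + dist cl pl + (dist pl p + dist p q) :=
    (dist_triangle c cl q).trans (by linarith [dist_triangle cl pl q, dist_triangle pl p q])
  have t3 : dist pl ql ≤ dist pl p + dist p q + dist q ql :=
    (dist_triangle pl p ql).trans (by linarith [dist_triangle p q ql])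
  have h1 : dist cl c = dist c cl := dist_comm cl c
  have h2 : dist pl p = dist p pl := dist_comm pl p
  have h3 : dist cl pl = dist pl cl := dist_comm cl pl
  have hnn : 0 ≤ dist p q := dist_nonneg
  have hpq : dist p pl ≤ dist p q := by linarith [dist_nonneg (x := r) (y := q)]
  have hpl : dist pl ql ≤ 2 * dist p q := by
    have := dist_comm r q; linarith
  have hwp := hw p
  have hwq := hw q
  have hwc := hw c
  have hccl : 0 ≤ dist c cl := dist_nonneg
  nlinarith [mul_le_mul_of_nonneg_left hpl (le_of_lt (by linarith : (0:ℝ) < ε/4))]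
end

section
/- Let (X, d) be a metric space and w : X → ℝ with w(x) ≥ 0 for all x. Let p, q, r, p_γ, q_γ ∈ X satisfy: d(p, r) + d(r, q) = d(p, q), d(p, p_γ) ≤ d(p, r), and d(q, q_γ) ≤ d(q, r). Then (w(p) + d(p, p_γ)) + d(p_γ, q_γ) + (w(q) + d(q, q_γ)) ≤ 3·(w(p) + d(p, q) + w(q)). -/
/-- Key inequality in Lemma 4 (terrain lifting lemma): with `p_γ, q_γ` the
projections of `p, q` onto the separator shortest path and `r` the crossing
point, `d_{w'}(p_γ, q_γ) ≤ 3·d_w(p, q)` where `w'(x_γ) = w(x) + d(x, x_γ)`. -/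
theorem stmt9 {X : Type*} [MetricSpace X] (w : X → ℝ) (hw : ∀ x, 0 ≤ w x)
    (p q r pγ qγ : X)
    (hr : dist p r + dist r q = dist p q)
    (hp : dist p pγ ≤ dist p r)
    (hq : dist q qγ ≤ dist q r) :
    (w p + dist p pγ) + dist pγ qγ + (w q + dist q qγ) ≤
      3 * (w p + dist p q + w q) := by
  have t : dist pγ qγ ≤ dist pγ p + dist p q + dist q qγ := by
    calc dist pγ qγ ≤ dist pγ q + dist q qγ := dist_triangle _ _ _
    _ ≤ dist pγ p + dist p q + dist q qγ := by
        have := dist_triangle pγ p q; linarith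
  have h1 : dist pγ p = dist p pγ := dist_comm _ _
  have h2 : dist r q = dist q r := dist_comm _ _
  linarith [hw p, hw q, dist_nonneg (x := p) (y := r), dist_nonneg (x := q) (y := r)]
end

section
/- Let (X, d) be a metric space, w : X → ℝ with w(x) ≥ 0 for all x, π : X → X a map (assigning to each point a projection), and define w′ : X → ℝ by w′(x) = w(x) + d(x, π(x)). Let t ≥ 0, let p, q, r ∈ X satisfy d(p, r) + d(r, q) = d(p, q), d(p, π(p)) ≤ d(p, r), and d(q, π(q)) ≤ d(q, r), and let x_0 = p, x_1, …, x_m = q be a finite sequence of points of X such that Σ_{i=0}^{m−1} [w′(x_i) + d(π(x_i), π(x_{i+1})) + w′(x_{i+1})] ≤ t·[w′(p) + d(π(p), π(q)) + w′(q)]. Then Σ_{i=0}^{m−1} [w(x_i) + d(x_i, x_{i+1}) + w(x_{i+1})] ≤ 3t·(w(p) + d(p, q) + w(q)). -/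
/-- Lemma 4 of the paper (lifting a spanner path on the separator back to the
terrain): a path `π(x_0), …, π(x_m)` between the projections `π(p)` and `π(q)`
whose weighted length (with respect to the restricted weights
`w'(x) = w(x) + d(x, π(x))`) is at most `t·d_{w'}(π(p), π(q))` lifts to a path
`x_0 = p, …, x_m = q` of weighted length at most `3t·d_w(p, q)`. -/
theorem stmt10 {X : Type*} [MetricSpace X] (w : X → ℝ) (hw : ∀ x, 0 ≤ w x)
    (π : X → X) (w' : X → ℝ) (hw' : ∀ x, w' x = w x + dist x (π x))
    (t : ℝ) (ht : 0 ≤ t) (p q r : X)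
    (hr : dist p r + dist r q = dist p q)
    (hp : dist p (π p) ≤ dist p r)
    (hq : dist q (π q) ≤ dist q r)
    (m : ℕ) (x : ℕ → X) (hx0 : x 0 = p) (hxm : x m = q)
    (hsum : ∑ i ∈ Finset.range m,
        (w' (x i) + dist (π (x i)) (π (x (i + 1))) + w' (x (i + 1))) ≤
      t * (w' p + dist (π p) (π q) + w' q)) :
    ∑ i ∈ Finset.range m, (w (x i) + dist (x i) (x (i + 1)) + w (x (i + 1))) ≤
      3 * t * (w p + dist p q + w q) := by
  have step1 : ∑ i ∈ Finset.range m, (w (x i) + dist (x i) (x (i + 1)) + w (x (i + 1))) ≤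
      ∑ i ∈ Finset.range m,
        (w' (x i) + dist (π (x i)) (π (x (i + 1))) + w' (x (i + 1))) := by
    apply Finset.sum_le_sum
    intro i _
    have h1 := hw' (x i)
    have h2 := hw' (x (i + 1))
    have h3 : dist (x i) (x (i + 1)) ≤
        dist (x i) (π (x i)) + dist (π (x i)) (π (x (i + 1))) + dist (π (x (i + 1))) (x (i + 1)) :=
      dist_triangle4 _ _ _ _
    have h4 : dist (π (x (i + 1))) (x (i + 1)) = dist (x (i + 1)) (π (x (i + 1))) := dist_comm _ _
    linarith
  have key : w' p + dist (π p) (π q) + w' q ≤ 3 * (w p + dist p q + w q) := by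
    have h1 := hw' p
    have h2 := hw' q
    have h3 : dist (π p) (π q) ≤ dist (π p) p + dist p q + dist q (π q) := dist_triangle4 _ _ _ _
    have h4 : dist (π p) p = dist p (π p) := dist_comm _ _
    have h5 : dist q r = dist r q := dist_comm _ _
    have := hw p
    have := hw q
    have := dist_nonneg (x := p) (y := r)
    have := dist_nonneg (x := r) (y := q)
    linarith
  calc _ ≤ t * (w' p + dist (π p) (π q) + w' q) := le_trans step1 hsum
    _ ≤ 3 * t * (w p + dist p q + w q) := by nlinarith
end
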